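/- Let ι be a finite nonempty type, let J : (ι → ℝ) → ℝ be convex and differentiable, let κ ≥ 0, and for each r ∈ ι let F_r : ℝ → ℝ be nondecreasing and g_r : ℝ → ℝ be nondecreasing with g_r(F_r(θ)) = θ for all θ ∈ ℝ. Define Φ(S) = J(S) + Σ_{r∈ι} ∫₀^{S_r} (g_r(s) + κ) ds. Suppose S* and θ̄ : ι → ℝ satisfy the Nash-equilibrium equations θ̄_r = −∂J/∂S_r(S*) − κ and S*_r = F_r(θ̄_r) for all r, with 0 < S*_r < 1 and g_r continuous at S*_r. Then S* is a global minimizer of Φ over {S : 0 ≤ S_r ≤ 1 for all r}; i.e., the Nash-equilibrium aggregate storage capacities for commuter EVs support the social welfare. -/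

import Mathlib

open Set intervalIntegral

/-- Gradient inequality for a convex differentiable function on `univ`. -/
lemma convex_gradient_ineq {E : Type*} [NormedAddCommGroup E] [NormedSpace ℝ E]
    (J : E → ℝ) (hJconv : ConvexOn ℝ Set.univ J) (hJdiff : Differentiable ℝ J)
    (x y : E) : J x + fderiv ℝ J x (y - x) ≤ J y := by
  set f : ℝ → ℝ := fun t => J (x + t • (y - x)) with hf
  have hline : ∀ t : ℝ, x + t • (y - x) = AffineMap.lineMap x y t := by
    intro t
    simp [AffineMap.lineMap_apply, add_comm]
  have hfe : f = J ∘ (AffineMap.lineMap x y) := by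
    funext t
    simp [f, hline t]
  have hfconv : ConvexOn ℝ Set.univ f := by
    rw [hfe]
    have := hJconv.comp_affineMap (AffineMap.lineMap x y)
    simpa using this
  have hderiv : HasDerivAt f (fderiv ℝ J x (y - x)) 0 := by
    have h1 : HasDerivAt (fun t : ℝ => x + t • (y - x)) (y - x) 0 := by
      simpa using ((hasDerivAt_id (0:ℝ)).smul_const (y - x)).const_add x
    have h2 := (hJdiff (x + (0:ℝ) • (y - x))).hasFDerivAt.comp_hasDerivAt 0 h1
    simp only [zero_smul, add_zero] at h2
    exact h2
  have hslope := hfconv.le_slope_of_hasDerivAt (Set.mem_univ (0:ℝ)) (Set.mem_univ (1:ℝ))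
    one_pos hderiv
  rw [slope_def_field] at hslope
  have hf0 : f 0 = J x := by simp [f]
  have hf1 : f 1 = J y := by simp [f]
  simp only [hf0, hf1] at hslope
  have : fderiv ℝ J x (y - x) ≤ J y - J x := by
    simpa using hslope
  linarith

/-- For a monotone function, the integral from `a` to `b` is at least the value at `a`
times the length, in both orientations. -/
lemma mono_integral_ge (h : ℝ → ℝ) (hmono : Monotone h) (a b : ℝ) :
    h a * (b - a) ≤ ∫ s in a..b, h s := by
  rcases le_total a b with hab | hba
  · have hint : IntervalIntegrable h MeasureTheory.volume a b :=
      hmono.intervalIntegrable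
    have := intervalIntegral.integral_mono_on hab
      (_root_.intervalIntegrable_const (c := h a)) hint
      (fun s hs => hmono hs.1)
    simpa [mul_comm, smul_eq_mul] using this
  · have hint : IntervalIntegrable h MeasureTheory.volume b a :=
      hmono.intervalIntegrable
    have hle := intervalIntegral.integral_mono_on hba hint
      (_root_.intervalIntegrable_const (c := h a))
      (fun s hs => hmono hs.2)
    rw [intervalIntegral.integral_symm]
    have : (∫ s in b..a, h s) ≤ h a * (a - b) := by
      simpa [mul_comm, smul_eq_mul] using hle
    linarith

/-- Theorem 1: any Nash equilibrium of the commuter EV battery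
sharing game supports the social welfare. If `S*` and thresholds `θ̄` satisfy the
Nash-equilibrium equations `θ̄_r = -∂J/∂S_r(S*) - κ`, `S*_r = F_r(θ̄_r)` with
`0 < S*_r < 1`, then `S*` globally minimizes the social cost
`Φ(S) = J(S) + Σ_r ∫₀^{S_r} (g_r(s) + κ) ds` over the unit box. -/
theorem commuter_nash_supports_social_welfare
    {ι : Type*} [Fintype ι] [Nonempty ι] [DecidableEq ι]
    (J : (ι → ℝ) → ℝ)
    (hJconv : ConvexOn ℝ Set.univ J)
    (hJdiff : Differentiable ℝ J)
    (κ : ℝ) (hκ : 0 ≤ κ)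
    (F : ι → ℝ → ℝ) (hF_mono : ∀ r, Monotone (F r))
    (g : ι → ℝ → ℝ) (hg_mono : ∀ r, Monotone (g r))
    (hgF : ∀ r θ, g r (F r θ) = θ)
    (Φ : (ι → ℝ) → ℝ)
    (hΦ : ∀ S, Φ S = J S + ∑ r, ∫ s in (0:ℝ)..(S r), (g r s + κ))
    (Sstar : ι → ℝ) (θbar : ι → ℝ)
    (hθbar : ∀ r, θbar r = -(fderiv ℝ J Sstar (Pi.single r 1)) - κ)
    (hfix : ∀ r, Sstar r = F r (θbar r))
    (hbox : ∀ r, 0 < Sstar r ∧ Sstar r < 1)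
    (hg_cont : ∀ r, ContinuousAt (g r) (Sstar r)) :
    IsMinOn Φ {S : ι → ℝ | ∀ r, 0 ≤ S r ∧ S r ≤ 1} Sstar := by
  intro S _
  simp only [mem_setOf_eq]
  rw [hΦ S, hΦ Sstar]
  -- value of g at Sstar r
  have hgS : ∀ r, g r (Sstar r) + κ = -(fderiv ℝ J Sstar (Pi.single r 1)) := by
    intro r
    rw [hfix r, hgF r, hθbar r]; ring
  -- integrand monotone
  have hmono : ∀ r, Monotone (fun s => g r s + κ) :=
    fun r => (hg_mono r).add_const κ
  -- integrability
  have hint : ∀ r (a b : ℝ),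
      IntervalIntegrable (fun s => g r s + κ) MeasureTheory.volume a b :=
    fun r a b => (hmono r).intervalIntegrable
  -- difference of integrals
  have hdiff : ∀ r, (∫ s in (0:ℝ)..(S r), (g r s + κ))
      - (∫ s in (0:ℝ)..(Sstar r), (g r s + κ))
      = ∫ s in (Sstar r)..(S r), (g r s + κ) :=
    fun r => intervalIntegral.integral_interval_sub_left (hint r 0 (S r)) (hint r 0 (Sstar r))
  -- lower bound each integral difference
  have hge : ∀ r, -(fderiv ℝ J Sstar (Pi.single r 1)) * (S r - Sstar r)
      ≤ (∫ s in (0:ℝ)..(S r), (g r s + κ)) - (∫ s in (0:ℝ)..(Sstar r), (g r s + κ)) := by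
    intro r
    rw [hdiff r, ← hgS r]
    exact mono_integral_ge _ (hmono r) (Sstar r) (S r)
  -- sum of the bounds
  have hsum : ∑ r, -(fderiv ℝ J Sstar (Pi.single r 1)) * (S r - Sstar r)
      ≤ ∑ r, ((∫ s in (0:ℝ)..(S r), (g r s + κ)) - (∫ s in (0:ℝ)..(Sstar r), (g r s + κ))) :=
    Finset.sum_le_sum fun r _ => hge r
  -- linearity of the derivative
  have hlin : fderiv ℝ J Sstar (S - Sstar)
      = ∑ r, (S r - Sstar r) * fderiv ℝ J Sstar (Pi.single r 1) := by
    have hrepr : (S - Sstar) = ∑ r, (S r - Sstar r) • (Pi.single r (1:ℝ) : ι → ℝ) := by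
      funext j
      simp [Pi.single_apply, Finset.sum_apply, mul_ite]
    rw [hrepr, map_sum]
    congr 1
    funext r
    rw [map_smul]
    simp [smul_eq_mul]
  -- gradient inequality
  have hgrad := convex_gradient_ineq J hJconv hJdiff Sstar S
  rw [hlin] at hgrad
  have hsum' : -∑ r, (S r - Sstar r) * fderiv ℝ J Sstar (Pi.single r 1)
      ≤ (∑ r, ∫ s in (0:ℝ)..(S r), (g r s + κ))
        - ∑ r, ∫ s in (0:ℝ)..(Sstar r), (g r s + κ) := by
    rw [← Finset.sum_sub_distrib, ← Finset.sum_neg_distrib]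
    refine le_trans (le_of_eq ?_) hsum
    congr 1; funext r; ring
  linarith
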